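/- Let α ∈ ℝ and suppose f : (0,1] → ℝ satisfies f(xy) = y^α·f(x) + x^α·f(y) for all x, y ∈ (0,1], and f is Lebesgue measurable. Then there exists c ∈ ℝ such that f(x) = c·x^α·ln(x) for all x ∈ (0,1]. -/

import Mathlib

open MeasureTheory Pointwise

/-- Measurable solution of the Cauchy functional equation on `ℝ` is linear. -/
lemma cauchy_measurable_linear (H : ℝ → ℝ) (hm : Measurable H)
    (hadd : ∀ s t : ℝ, H (s + t) = H s + H t) : ∃ c : ℝ, ∀ t : ℝ, H t = c * t := by
  have H0 : H 0 = 0 := by have := hadd 0 0; simp at this; linarith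
  let H' : ℝ →+ ℝ := AddMonoidHom.mk' H hadd
  have hH' : ⇑H' = H := rfl
  -- find a set of positive measure on which `H` is bounded
  obtain ⟨N, hN⟩ : ∃ N : ℕ, 0 < volume (Set.Icc (0:ℝ) 1 ∩ {t | |H t| ≤ (N:ℝ)}) := by
    by_contra hcon
    push_neg at hcon
    have hsub : Set.Icc (0:ℝ) 1 ⊆ ⋃ N : ℕ, Set.Icc (0:ℝ) 1 ∩ {t | |H t| ≤ (N:ℝ)} := by
      intro t ht
      exact Set.mem_iUnion.mpr ⟨⌈|H t|⌉₊, ht, by simpa using Nat.le_ceil |H t|⟩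
    have h0 : volume (⋃ N : ℕ, Set.Icc (0:ℝ) 1 ∩ {t | |H t| ≤ (N:ℝ)}) = 0 :=
      measure_iUnion_null fun N => le_zero_iff.mp (hcon N)
    have := (measure_mono hsub).trans h0.le
    simp [Real.volume_Icc] at this
  set E : Set ℝ := Set.Icc (0:ℝ) 1 ∩ {t | |H t| ≤ (N:ℝ)} with hE
  have hEm : MeasurableSet E :=
    measurableSet_Icc.inter (measurableSet_le hm.abs measurable_const)
  have hnhds : E - E ∈ nhds (0:ℝ) :=
    MeasureTheory.Measure.sub_mem_nhds_zero_of_addHaar_pos volume E hEm hN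
  have hbound : ∀ u ∈ E - E, |H u| ≤ 2 * N := by
    rintro u ⟨a, ha, b, hb, rfl⟩
    have h1 : H (a - b) = H a - H b := map_sub H' a b
    rw [h1]
    have := abs_sub (H a) (H b)
    have h2 : |H a| ≤ (N:ℝ) := ha.2
    have h3 : |H b| ≤ (N:ℝ) := hb.2
    calc |H a - H b| ≤ |H a| + |H b| := abs_sub _ _
      _ ≤ 2 * N := by linarith
  -- continuity at zero
  have hcont0 : Filter.Tendsto H (nhds 0) (nhds 0) := by
    rw [Metric.tendsto_nhds]
    intro ε hε
    set m : ℕ := ⌈(2 * (N:ℝ)) / ε⌉₊ + 1 with hmdef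
    have hm0 : (0:ℝ) < m := by positivity
    have hlt : 2 * (N:ℝ) < m * ε := by
      have h1 : (2 * (N:ℝ)) / ε < m := by
        calc (2 * (N:ℝ)) / ε ≤ (⌈(2 * (N:ℝ)) / ε⌉₊ : ℝ) := Nat.le_ceil _
          _ < m := Nat.cast_lt.mpr (Nat.lt_succ_self _)
      calc 2 * (N:ℝ) = (2 * N) / ε * ε := by field_simp
        _ < m * ε := by exact mul_lt_mul_of_pos_right h1 hε
    have hV : (fun u : ℝ => (m:ℝ) * u) ⁻¹' (E - E) ∈ nhds (0:ℝ) := by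
      have hc : ContinuousAt (fun u : ℝ => (m:ℝ) * u) 0 :=
        (continuous_const.mul continuous_id).continuousAt
      have : (m:ℝ) * 0 = 0 := by ring
      exact hc.preimage_mem_nhds (by rwa [this])
    filter_upwards [hV] with u hu
    have h1 : H ((m:ℝ) * u) = m * H u := by
      have := AddMonoidHom.map_nsmul H' m u
      simpa [hH', nsmul_eq_mul] using this
    have h2 : |H ((m:ℝ) * u)| ≤ 2 * N := hbound _ hu
    rw [h1, abs_mul, abs_of_nonneg hm0.le] at h2
    rw [Real.dist_eq, sub_zero]
    have : (m:ℝ) * |H u| < m * ε := lt_of_le_of_lt h2 hlt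
    exact lt_of_mul_lt_mul_left this hm0.le
  have hcont : Continuous H := by
    have : ContinuousAt H' 0 := by
      rw [ContinuousAt, hH', H0]
      exact hcont0
    have := continuous_of_continuousAt_zero H' this
    rwa [hH'] at this
  refine ⟨H 1, fun t => ?_⟩
  have := map_real_smul H' (by rwa [hH']) t 1
  simp only [hH', smul_eq_mul, mul_one] at this
  rw [this, mul_comm]

theorem stmt_12 (α : ℝ) (f : ℝ → ℝ)
    (hf : ∀ x ∈ Set.Ioc (0:ℝ) 1, ∀ y ∈ Set.Ioc (0:ℝ) 1,
      f (x * y) = y ^ α * f x + x ^ α * f y)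
    (hmeas : Measurable fun x : Set.Ioc (0:ℝ) 1 => f x) :
    ∃ c : ℝ, ∀ x ∈ Set.Ioc (0:ℝ) 1, f x = c * x ^ α * Real.log x := by
  set h : ℝ → ℝ := fun t => f (Real.exp (-t)) * Real.exp (α * t) with hh
  have hmem : ∀ t : ℝ, 0 ≤ t → Real.exp (-t) ∈ Set.Ioc (0:ℝ) 1 := by
    intro t ht
    refine ⟨Real.exp_pos _, ?_⟩
    calc Real.exp (-t) ≤ Real.exp 0 := Real.exp_le_exp.mpr (by linarith)
      _ = 1 := Real.exp_zero
  -- key additivity on nonnegative reals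
  have key : ∀ a b : ℝ, 0 ≤ a → 0 ≤ b → h (a + b) = h a + h b := by
    intro a b ha hb
    have hx := hmem a ha
    have hy := hmem b hb
    have heq := hf _ hx _ hy
    have hxy : Real.exp (-a) * Real.exp (-b) = Real.exp (-(a + b)) := by
      rw [← Real.exp_add]; ring_nf
    rw [hxy] at heq
    simp only [hh]
    rw [heq]
    rw [← Real.exp_mul, ← Real.exp_mul]
    have e1 : Real.exp (-b * α) * Real.exp (α * (a + b)) = Real.exp (α * a) := by
      rw [← Real.exp_add]; congr 1; ring
    have e2 : Real.exp (-a * α) * Real.exp (α * (a + b)) = Real.exp (α * b) := by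
      rw [← Real.exp_add]; congr 1; ring
    linear_combination f (Real.exp (-a)) * e1 + f (Real.exp (-b)) * e2
  -- extend to an additive function on ℝ
  set H : ℝ → ℝ := fun t => if 0 ≤ t then h t else -h (-t) with hHdef
  have hHnn : ∀ t : ℝ, 0 ≤ t → H t = h t := by
    intro t ht; simp only [hHdef, if_pos ht]
  have hHneg : ∀ t : ℝ, t < 0 → H t = -h (-t) := by
    intro t ht; simp only [hHdef, if_neg (not_le.mpr ht)]
  have hmeasH : Measurable H := by
    have habs : H = fun t => (if 0 ≤ t then (1:ℝ) else -1) * h |t| := by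
      funext t
      by_cases ht : 0 ≤ t
      · simp [hHdef, ht, abs_of_nonneg ht]
      · simp [hHdef, ht, abs_of_neg (not_le.mp ht)]
    rw [habs]
    have hφ : Measurable fun t : ℝ => (⟨Real.exp (-|t|), hmem _ (abs_nonneg t)⟩ :
        Set.Ioc (0:ℝ) 1) := by
      apply Measurable.subtype_mk
      exact Real.measurable_exp.comp measurable_abs.neg
    have h1 : Measurable fun t : ℝ => f (Real.exp (-|t|)) := hmeas.comp hφ
    have h2 : Measurable fun t : ℝ => Real.exp (α * |t|) :=
      Real.measurable_exp.comp (measurable_const.mul measurable_abs)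
    exact (Measurable.ite measurableSet_Ici measurable_const measurable_const).mul (h1.mul h2)
  have h0 : h 0 = 0 := by
    have := key 0 0 le_rfl le_rfl
    simp at this
    linarith
  have haddH : ∀ s t : ℝ, H (s + t) = H s + H t := by
    intro s t
    rcases le_or_gt 0 s with hs | hs <;> rcases le_or_gt 0 t with ht | ht <;>
      rcases le_or_gt 0 (s + t) with hst | hst
    · rw [hHnn _ hs, hHnn _ ht, hHnn _ hst, key s t hs ht]
    · linarith
    · -- s ≥ 0, t < 0, s + t ≥ 0
      rw [hHnn _ hs, hHneg _ ht, hHnn _ hst]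
      have := key (s + t) (-t) hst (by linarith)
      rw [show s + t + -t = s by ring] at this
      linarith
    · -- s ≥ 0, t < 0, s + t < 0
      rw [hHnn _ hs, hHneg _ ht, hHneg _ hst]
      have := key (-(s + t)) s (by linarith) hs
      rw [show -(s + t) + s = -t by ring] at this
      linarith
    · -- s < 0, t ≥ 0, s + t ≥ 0
      rw [hHneg _ hs, hHnn _ ht, hHnn _ hst]
      have := key (s + t) (-s) hst (by linarith)
      rw [show s + t + -s = t by ring] at this
      linarith
    · -- s < 0, t ≥ 0, s + t < 0
      rw [hHneg _ hs, hHnn _ ht, hHneg _ hst]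
      have := key (-(s + t)) t (by linarith) ht
      rw [show -(s + t) + t = -s by ring] at this
      linarith
    · linarith
    · -- both negative
      rw [hHneg _ hs, hHneg _ ht, hHneg _ hst]
      have := key (-s) (-t) (by linarith) (by linarith)
      rw [show -s + -t = -(s + t) by ring] at this
      linarith
  obtain ⟨c, hc⟩ := cauchy_measurable_linear H hmeasH haddH
  refine ⟨-c, fun x hx => ?_⟩
  have hlog : Real.log x ≤ 0 := Real.log_nonpos hx.1.le hx.2
  set t : ℝ := -Real.log x with htdef
  have ht : 0 ≤ t := by simp [htdef]; linarith
  have hxt : Real.exp (-t) = x := by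
    rw [htdef, neg_neg, Real.exp_log hx.1]
  have h1 : h t = c * t := by rw [← hHnn _ ht, hc]
  have h2 : f x * Real.exp (α * t) = c * t := by
    rw [← hxt] at *
    exact h1
  have hxa : (x:ℝ) ^ α = Real.exp (Real.log x * α) := Real.rpow_def_of_pos hx.1 α
  have h3 : Real.exp (α * t) * x ^ α = 1 := by
    rw [hxa, ← Real.exp_add, htdef]
    rw [show α * -Real.log x + Real.log x * α = 0 by ring, Real.exp_zero]
  calc f x = f x * (Real.exp (α * t) * x ^ α) := by rw [h3, mul_one]
    _ = (f x * Real.exp (α * t)) * x ^ α := by ring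
    _ = c * t * x ^ α := by rw [h2]
    _ = -c * x ^ α * Real.log x := by rw [htdef]; ring
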